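/- arXiv:1304.6108 — 5 statements merged into one kernel-verified Lean document; each statement's English description precedes it below -/
import Mathlib

section
/- Let E be a finite-dimensional real vector space and 1 ≤ d ≤ dim E. Let (v₁,…,v_d) and (w₁,…,w_d) be two linearly independent families of vectors in E. Then the simple d-vectors v₁∧…∧v_d and w₁∧…∧w_d in ⋀^d E are nonzero, and there exists a nonzero scalar c ∈ ℝ with w₁∧…∧w_d = c·(v₁∧…∧v_d) if and only if span{v₁,…,v_d} = span{w₁,…,w_d}. Consequently the map sending a d-dimensional subspace spanned by (v₁,…,v_d) to the line through v₁∧…∧v_d is a well-defined injection of the Grassmannian of d-planes of E into the projective space of ⋀^d E. -/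
theorem plucker_aux_ne_zero {E : Type*} [AddCommGroup E] [Module ℝ E] [FiniteDimensional ℝ E]
    {d : ℕ} {v : Fin d → E} (hv : LinearIndependent ℝ v) :
    ExteriorAlgebra.ιMulti ℝ d v ≠ 0 := by
  classical
  set W := Submodule.span ℝ (Set.range v) with hW
  obtain ⟨W', hc⟩ := Submodule.exists_isCompl W
  let p := Submodule.linearProjOfIsCompl W W' hc
  let b : Module.Basis (Fin d) ℝ W := Module.Basis.span hv
  let φ : E [⋀^Fin d]→ₗ[ℝ] ℝ := b.det.compLinearMap p
  intro h
  have h2 := congrArg (ExteriorAlgebra.liftAlternating (Function.update (fun _ => 0) d φ)) h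
  rw [map_zero, ExteriorAlgebra.liftAlternating_apply_ιMulti, Function.update_self] at h2
  have hv' : ∀ i, (fun i => p (v i)) i = b i := by
    intro i
    have hm : v i ∈ W := Submodule.subset_span (Set.mem_range_self i)
    have : p (v i) = ⟨v i, hm⟩ := Submodule.linearProjOfIsCompl_apply_left hc ⟨v i, hm⟩
    show p (v i) = b i
    rw [this]
    exact (Module.Basis.span_apply hv i).symm
  have h3 : φ v = b.det b := by
    show b.det (fun i => p (v i)) = b.det b
    exact congrArg b.det (funext hv')
  rw [h3, Module.Basis.det_self] at h2
  exact one_ne_zero h2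

theorem plucker_aux_smul {E : Type*} [AddCommGroup E] [Module ℝ E]
    {d : ℕ} {v w : Fin d → E} (hv : LinearIndependent ℝ v) (hw : LinearIndependent ℝ w)
    (hs : Submodule.span ℝ (Set.range v) = Submodule.span ℝ (Set.range w)) :
    ∃ c : ℝ, c ≠ 0 ∧ ExteriorAlgebra.ιMulti ℝ d w = c • ExteriorAlgebra.ιMulti ℝ d v := by
  classical
  set W := Submodule.span ℝ (Set.range v) with hWdef
  let bv : Module.Basis (Fin d) ℝ W := Module.Basis.span hv
  let bw : Module.Basis (Fin d) ℝ W := (Module.Basis.span hw).map (LinearEquiv.ofEq _ _ hs.symm)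
  have hbv : ∀ i, (bv i : E) = v i := fun i => congrArg Subtype.val (Module.Basis.span_apply hv i)
  have hbw : ∀ i, (bw i : E) = w i := fun i => congrArg Subtype.val (Module.Basis.span_apply hw i)
  let F : W [⋀^Fin d]→ₗ[ℝ] ExteriorAlgebra ℝ E :=
    (ExteriorAlgebra.ιMulti ℝ d).compLinearMap W.subtype
  have hFv : F bv = ExteriorAlgebra.ιMulti ℝ d v := by
    show ExteriorAlgebra.ιMulti ℝ d (fun i => (bv i : E)) = _
    exact congrArg _ (funext hbv)
  have hFw : F bw = ExteriorAlgebra.ιMulti ℝ d w := by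
    show ExteriorAlgebra.ιMulti ℝ d (fun i => (bw i : E)) = _
    exact congrArg _ (funext hbw)
  have key : F = (LinearMap.toSpanSingleton ℝ _ (F bv)).compAlternatingMap bv.det := by
    refine Module.Basis.ext_alternating bv fun u hu => ?_
    have hbij : Function.Bijective u := Finite.injective_iff_bijective.1 hu
    let σ : Equiv.Perm (Fin d) := Equiv.ofBijective u hbij
    have hσ : (fun i => bv (u i)) = ⇑bv ∘ σ := rfl
    rw [hσ]
    rw [AlternatingMap.map_perm, LinearMap.compAlternatingMap_apply,
      AlternatingMap.map_perm, Module.Basis.det_self, LinearMap.toSpanSingleton_apply]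
    simp [Units.smul_def, Int.cast_smul_eq_zsmul]
  have := congrArg (fun f => f (⇑bw)) key
  simp only [LinearMap.compAlternatingMap_apply, LinearMap.toSpanSingleton_apply] at this
  refine ⟨bv.det bw, (Module.Basis.isUnit_det bv bw).ne_zero, ?_⟩
  rw [← hFv, ← hFw]
  exact this
theorem plucker_aux_span {E : Type*} [AddCommGroup E] [Module ℝ E] [FiniteDimensional ℝ E]
    {d : ℕ} {v w : Fin d → E} (hv : LinearIndependent ℝ v) (hw : LinearIndependent ℝ w)
    {c : ℝ} (hc : c ≠ 0) (h : ExteriorAlgebra.ιMulti ℝ d w = c • ExteriorAlgebra.ιMulti ℝ d v) :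
    Submodule.span ℝ (Set.range v) = Submodule.span ℝ (Set.range w) := by
  classical
  have hsub : ∀ j, w j ∈ Submodule.span ℝ (Set.range v) := by
    intro j
    by_contra hj
    have hcons : LinearIndependent ℝ (Fin.cons (w j) v : Fin (d+1) → E) :=
      linearIndependent_fin_cons.2 ⟨hv, hj⟩
    have hne := plucker_aux_ne_zero hcons
    have e1 : ExteriorAlgebra.ιMulti ℝ (d+1) (Fin.cons (w j) v) =
        ExteriorAlgebra.ι ℝ (w j) * ExteriorAlgebra.ιMulti ℝ d v := by
      rw [ExteriorAlgebra.ιMulti_succ_apply]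
      rfl
    have e2 : ExteriorAlgebra.ι ℝ (w j) * ExteriorAlgebra.ιMulti ℝ d w = 0 := by
      have : ExteriorAlgebra.ιMulti ℝ (d+1) (Fin.cons (w j) w) = 0 := by
        refine AlternatingMap.map_eq_zero_of_eq _ _ (i := 0) (j := j.succ) ?_ ?_
        · simp
        · exact fun h0 => (Fin.succ_ne_zero j) h0.symm
      rw [ExteriorAlgebra.ιMulti_succ_apply] at this
      convert this using 2 <;> rfl
    rw [h, mul_smul_comm, ← e1] at e2
    exact hne (smul_eq_zero_iff_right hc |>.mp e2)
  have hle : Submodule.span ℝ (Set.range w) ≤ Submodule.span ℝ (Set.range v) :=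
    Submodule.span_le.2 (Set.range_subset_iff.2 hsub)
  refine (Submodule.eq_of_le_of_finrank_le hle ?_).symm
  rw [finrank_span_eq_card hv, finrank_span_eq_card hw]
/-- Plücker embedding, injectivity part: for two linearly independent `d`-families `v`, `w` in a
finite-dimensional real vector space `E`, the simple `d`-vectors `v₁∧…∧v_d` and `w₁∧…∧w_d` are
nonzero; `w₁∧…∧w_d` is a nonzero scalar multiple of `v₁∧…∧v_d` iff the spans coincide; and
consequently the corresponding points in the projective space of `⋀^d E` coincide iff the spans
coincide, so the induced map from the Grassmannian of `d`-planes to `P(⋀^d E)` is a well-defined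
injection. -/
theorem plucker_injective
    (E : Type*) [AddCommGroup E] [Module ℝ E] [FiniteDimensional ℝ E]
    (d : ℕ) (hd1 : 1 ≤ d) (hdn : d ≤ Module.finrank ℝ E)
    (v w : Fin d → E) (hv : LinearIndependent ℝ v) (hw : LinearIndependent ℝ w) :
    ∃ (hv0 : ExteriorAlgebra.ιMulti ℝ d v ≠ 0) (hw0 : ExteriorAlgebra.ιMulti ℝ d w ≠ 0),
      ((∃ c : ℝ, c ≠ 0 ∧
          ExteriorAlgebra.ιMulti ℝ d w = c • ExteriorAlgebra.ιMulti ℝ d v) ↔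
        Submodule.span ℝ (Set.range v) = Submodule.span ℝ (Set.range w)) ∧
      (Projectivization.mk ℝ
          (⟨ExteriorAlgebra.ιMulti ℝ d v, ExteriorAlgebra.ιMulti_range ℝ d ⟨v, rfl⟩⟩ :
            ⋀[ℝ]^d E)
          (fun h => hv0 (by simpa [Subtype.ext_iff] using h)) =
        Projectivization.mk ℝ
          (⟨ExteriorAlgebra.ιMulti ℝ d w, ExteriorAlgebra.ιMulti_range ℝ d ⟨w, rfl⟩⟩ :
            ⋀[ℝ]^d E)
          (fun h => hw0 (by simpa [Subtype.ext_iff] using h)) ↔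
        Submodule.span ℝ (Set.range v) = Submodule.span ℝ (Set.range w)) := by
  have hv0 := plucker_aux_ne_zero hv
  have hw0 := plucker_aux_ne_zero hw
  have hiff : (∃ c : ℝ, c ≠ 0 ∧
      ExteriorAlgebra.ιMulti ℝ d w = c • ExteriorAlgebra.ιMulti ℝ d v) ↔
      Submodule.span ℝ (Set.range v) = Submodule.span ℝ (Set.range w) :=
    ⟨fun ⟨c, hc, h⟩ => plucker_aux_span hv hw hc h, fun hs => plucker_aux_smul hv hw hs⟩
  refine ⟨hv0, hw0, hiff, ?_⟩
  rw [← hiff, Projectivization.mk_eq_mk_iff]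
  constructor
  · rintro ⟨a, ha⟩
    have hval : (a : ℝ) • ExteriorAlgebra.ιMulti ℝ d w = ExteriorAlgebra.ιMulti ℝ d v := by
      have := congrArg Subtype.val ha
      simpa [Units.smul_def] using this
    refine ⟨(a : ℝ)⁻¹, inv_ne_zero a.ne_zero, ?_⟩
    rw [← hval, inv_smul_smul₀ a.ne_zero]
  · rintro ⟨c, hc, h⟩
    refine ⟨(Units.mk0 c hc)⁻¹, ?_⟩
    apply Subtype.ext
    simp only [SetLike.val_smul, h, Units.smul_def, smul_smul]
    norm_num
    rw [inv_mul_cancel₀ hc, one_smul]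
end

section
/- Fix integers 0 ≤ d ≤ n and identify the Grassmannian G_d(ℝⁿ) with the compact set G of real n×n matrices P satisfying Pᵀ = P, P² = P and trace(P) = d (the orthogonal projections onto d-dimensional subspaces), with the subspace topology from the matrix space. Let h : ℝ → ℝ be continuous with h ≥ 0 and h(0) > 0, and let k_t : G × G → ℝ be continuous with k_t ≥ 0 and k_t(P,P) > 0 for every P ∈ G. Then there exists a constant C > 0, depending only on h and k_t (and n, d), such that for every finite positive Borel measure μ on ℝⁿ × G whose support is contained in (closed unit ball of ℝⁿ) × G, one has ∬_{(ℝⁿ×G)²} h(‖x−y‖)·k_t(P,Q) dμ(x,P) dμ(y,Q) ≥ C · μ(ℝⁿ × G)². -/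
open MeasureTheory

instance matrixMeasurableSpace (n : ℕ) : MeasurableSpace (Matrix (Fin n) (Fin n) ℝ) :=
  borel _

instance matrixBorelSpace (n : ℕ) : BorelSpace (Matrix (Fin n) (Fin n) ℝ) := ⟨rfl⟩

/-- The Grassmannian `G_d(ℝⁿ)`, realized as the compact set of real `n×n` matrices `P` with
`Pᵀ = P`, `P² = P` and `trace P = d` (orthogonal projections onto `d`-dimensional subspaces). -/
def Grass (n d : ℕ) : Set (Matrix (Fin n) (Fin n) ℝ) :=
  {P | P.transpose = P ∧ P * P = P ∧ P.trace = (d : ℝ)}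

open scoped ENNReal
set_option maxHeartbeats 1000000 in
lemma grass_isCompact (n d : ℕ) : IsCompact (Grass n d) := by
  have hbox : IsCompact ((Set.univ.pi fun _ : Fin n => Set.univ.pi fun _ : Fin n =>
      Set.Icc (-1 : ℝ) 1 : Set ((Fin n) → (Fin n) → ℝ)) : Set (Matrix (Fin n) (Fin n) ℝ)) :=
    isCompact_univ_pi fun _ => isCompact_univ_pi fun _ => isCompact_Icc
  refine hbox.of_isClosed_subset ?_ ?_
  · have h1 : IsClosed {P : Matrix (Fin n) (Fin n) ℝ | P.transpose = P} :=
      isClosed_eq (continuous_id.matrix_transpose) continuous_id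
    have h2 : IsClosed {P : Matrix (Fin n) (Fin n) ℝ | P * P = P} :=
      isClosed_eq (continuous_id.matrix_mul continuous_id) continuous_id
    have h3 : IsClosed {P : Matrix (Fin n) (Fin n) ℝ | P.trace = (d : ℝ)} :=
      isClosed_eq (continuous_id.matrix_trace) continuous_const
    exact h1.inter (h2.inter h3)
  · rintro P ⟨hsym, hidem, -⟩
    have hsymm : ∀ i j, P j i = P i j := by
      intro i j
      exact congrFun (congrFun hsym i) j
    have hdiag : ∀ i, P i i = ∑ j, (P i j) ^ 2 := by
      intro i
      have h := congrFun (congrFun hidem i) i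
      replace h : ∑ j, P i j * P j i = P i i := (Matrix.mul_apply).symm.trans h
      rw [← h]
      exact Finset.sum_congr rfl fun j _ => by rw [hsymm i j, sq]
    have hterm : ∀ i j, (P i j) ^ 2 ≤ P i i := by
      intro i j
      rw [hdiag i]
      exact Finset.single_le_sum (f := fun k => (P i k) ^ 2) (fun k _ => sq_nonneg _) (Finset.mem_univ j)
    have hdiag_le : ∀ i, P i i ≤ 1 := fun i => by nlinarith [hterm i i]
    simp only [Set.mem_pi, Set.mem_univ, forall_true_left, Set.mem_Icc]
    intro i j
    have hsq : (P i j) ^ 2 ≤ 1 := le_trans (hterm i j) (hdiag_le i)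
    constructor <;> nlinarith

/-- Auxiliary kernel. -/
noncomputable def varKer (n d : ℕ) (h : ℝ → ℝ) (kt : Grass n d → Grass n d → ℝ)
    (p q : EuclideanSpace ℝ (Fin n) × Grass n d) : ℝ :=
  h ‖p.1 - q.1‖ * kt p.2 q.2


/-- Main theorem: for a radial continuous kernel `h(‖x−y‖)` with `h ≥ 0`, `h(0) > 0` on `ℝⁿ` and
a continuous kernel `k_t ≥ 0` with `k_t(P,P) > 0` on the Grassmannian, there is a constant
`C > 0` such that every finite positive varifold `μ` supported in (closed unit ball) × G
satisfies `∬ h(‖x−y‖)·k_t(P,Q) dμ dμ ≥ C · μ(ℝⁿ×G)²`. -/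
theorem varifold_kernel_norm_ge_mass
    (n d : ℕ) (hdn : d ≤ n)
    (h : ℝ → ℝ) (hcont : Continuous h) (hnonneg : ∀ t, 0 ≤ h t) (hzero : 0 < h 0)
    (kt : Grass n d → Grass n d → ℝ) (ktcont : Continuous (Function.uncurry kt))
    (ktnonneg : ∀ P Q, 0 ≤ kt P Q) (ktpos : ∀ P, 0 < kt P P) :
    ∃ C : ℝ, 0 < C ∧
      ∀ μ : Measure (EuclideanSpace ℝ (Fin n) × Grass n d), IsFiniteMeasure μ →
        μ {p | p.1 ∉ Metric.closedBall (0 : EuclideanSpace ℝ (Fin n)) 1} = 0 →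
        ENNReal.ofReal C * (μ Set.univ) ^ 2 ≤
          ∫⁻ p, ∫⁻ q, ENNReal.ofReal (h ‖p.1 - q.1‖ * kt p.2 q.2) ∂μ ∂μ := by
  classical
  obtain ⟨K, hK⟩ : ∃ K, K = varKer n d h kt := ⟨_, rfl⟩
  have hKdef : ∀ p q, K p q = h ‖p.1 - q.1‖ * kt p.2 q.2 := by
    intro p q; rw [hK]; rfl
  have hGc : IsCompact (Set.univ : Set (Grass n d)) :=
    isCompact_iff_isCompact_univ.mp (grass_isCompact n d)
  have hKcont : Continuous (fun pq :
      (EuclideanSpace ℝ (Fin n) × Grass n d) × (EuclideanSpace ℝ (Fin n) × Grass n d) =>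
      K pq.1 pq.2) := by
    have h1 : Continuous (fun pq :
        (EuclideanSpace ℝ (Fin n) × Grass n d) × (EuclideanSpace ℝ (Fin n) × Grass n d) =>
        h ‖pq.1.1 - pq.2.1‖) :=
      hcont.comp (((continuous_fst.comp continuous_fst).sub
        (continuous_fst.comp continuous_snd)).norm)
    have h2 : Continuous (fun pq :
        (EuclideanSpace ℝ (Fin n) × Grass n d) × (EuclideanSpace ℝ (Fin n) × Grass n d) =>
        Function.uncurry kt (pq.1.2, pq.2.2)) :=
      ktcont.comp ((continuous_snd.comp continuous_fst).prodMk
        (continuous_snd.comp continuous_snd))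
    have h3 := h1.mul h2
    simpa only [hKdef, Function.uncurry_apply_pair, Pi.mul_def] using h3
  have hKdiag : ∀ p : EuclideanSpace ℝ (Fin n) × Grass n d, 0 < K p p := by
    intro p
    rw [hKdef, sub_self, norm_zero]
    exact mul_pos hzero (ktpos _)
  have hKnonneg : ∀ p q, 0 ≤ K p q := by
    intro p q; rw [hKdef]; exact mul_nonneg (hnonneg _) (ktnonneg _ _)
  have key : ∀ p : EuclideanSpace ℝ (Fin n) × Grass n d,
      ∃ U : Set (EuclideanSpace ℝ (Fin n) × Grass n d), IsOpen U ∧ p ∈ U ∧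
      ∀ q ∈ U, ∀ r ∈ U, K p p / 2 ≤ K q r := by
    intro p
    have hopen : IsOpen {qr :
        (EuclideanSpace ℝ (Fin n) × Grass n d) × (EuclideanSpace ℝ (Fin n) × Grass n d) |
        K p p / 2 < K qr.1 qr.2} := isOpen_lt continuous_const hKcont
    have hmem : (p, p) ∈ {qr :
        (EuclideanSpace ℝ (Fin n) × Grass n d) × (EuclideanSpace ℝ (Fin n) × Grass n d) |
        K p p / 2 < K qr.1 qr.2} := by
      have := hKdiag p
      simp only [Set.mem_setOf_eq]
      linarith
    rcases isOpen_prod_iff.mp hopen p p hmem with ⟨A, B, hA, hB, hpA, hpB, hAB⟩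
    refine ⟨A ∩ B, hA.inter hB, ⟨hpA, hpB⟩, fun q hq r hr => ?_⟩
    have : (q, r) ∈ A ×ˢ B := ⟨hq.1, hr.2⟩
    exact le_of_lt (hAB this)
  choose U hUo hUm hUb using key
  obtain ⟨S, hS⟩ : ∃ S : Set (EuclideanSpace ℝ (Fin n) × Grass n d),
      S = Metric.closedBall (0 : EuclideanSpace ℝ (Fin n)) 1 ×ˢ (Set.univ : Set (Grass n d)) :=
    ⟨_, rfl⟩
  have hScomp : IsCompact S := by
    rw [hS]
    exact (isCompact_closedBall (0 : EuclideanSpace ℝ (Fin n)) 1).prod hGc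
  have hcover : S ⊆ ⋃ p : EuclideanSpace ℝ (Fin n) × Grass n d, U p :=
    fun p _ => Set.mem_iUnion.2 ⟨p, hUm p⟩
  obtain ⟨F, hFcov⟩ := hScomp.elim_finite_subcover U hUo hcover
  have hSc : ∀ μ : Measure (EuclideanSpace ℝ (Fin n) × Grass n d),
      μ {p | p.1 ∉ Metric.closedBall (0 : EuclideanSpace ℝ (Fin n)) 1} = 0 →
      μ Set.univ ≤ μ S := by
    intro μ hμ0
    have hcompl : Sᶜ = {p : EuclideanSpace ℝ (Fin n) × Grass n d |
        p.1 ∉ Metric.closedBall (0 : EuclideanSpace ℝ (Fin n)) 1} := by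
      rw [hS]; ext p; simp [Set.mem_prod]
    have h1 : μ Set.univ ≤ μ S + μ Sᶜ := by
      rw [← Set.union_compl_self S]
      exact measure_union_le S Sᶜ
    rwa [hcompl, hμ0, add_zero] at h1
  rcases F.eq_empty_or_nonempty with hFe | hFne
  · refine ⟨1, one_pos, fun μ _ hμ0 => ?_⟩
    have hSe : μ S = 0 := by
      have : S = ∅ := by
        apply Set.subset_empty_iff.mp
        intro p hp
        have := hFcov hp
        simp [hFe] at this
      rw [this, measure_empty]
    have huniv : μ Set.univ = 0 := le_antisymm (hSe ▸ hSc μ hμ0) zero_le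
    rw [huniv]
    simp
  · obtain ⟨ε, hεdef⟩ : ∃ ε : ℝ, ε = F.inf' hFne (fun p => K p p / 2) := ⟨_, rfl⟩
    have hεpos : 0 < ε := by
      rw [hεdef, Finset.lt_inf'_iff]
      intro p _
      have := hKdiag p
      linarith
    obtain ⟨N, hNdef⟩ : ∃ N : ℕ, N = F.card := ⟨_, rfl⟩
    have hNpos : 0 < N := hNdef ▸ Finset.card_pos.mpr hFne
    refine ⟨ε / (N : ℝ) ^ 2, div_pos hεpos (by positivity), fun μ _ hμ0 => ?_⟩
    obtain ⟨p₀, hp₀F, hp₀max⟩ := F.exists_max_image (fun p => μ (U p)) hFne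
    have hUmeas : MeasurableSet (U p₀) := (hUo p₀).measurableSet
    have hmass : μ Set.univ ≤ (N : ℝ≥0∞) * μ (U p₀) := by
      have h2 : μ S ≤ ∑ p ∈ F, μ (U p) :=
        le_trans (measure_mono hFcov) (measure_biUnion_finset_le F U)
      have h3 : ∑ p ∈ F, μ (U p) ≤ N • μ (U p₀) := by
        rw [hNdef]
        exact Finset.sum_le_card_nsmul F _ _ (fun p hp => hp₀max p hp)
      rw [nsmul_eq_mul] at h3
      exact le_trans (hSc μ hμ0) (le_trans h2 h3)
    have hεf : ∀ q ∈ U p₀, ∀ r ∈ U p₀, ε ≤ K q r := by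
      intro q hq r hr
      refine le_trans ?_ (hUb p₀ q hq r hr)
      rw [hεdef]
      exact Finset.inf'_le _ hp₀F
    have hI : ENNReal.ofReal ε * μ (U p₀) * μ (U p₀) ≤
        ∫⁻ p, ∫⁻ q, ENNReal.ofReal (K p q) ∂μ ∂μ := by
      calc ENNReal.ofReal ε * μ (U p₀) * μ (U p₀)
          = ∫⁻ _ in U p₀, ENNReal.ofReal ε * μ (U p₀) ∂μ := by
            rw [setLIntegral_const]
        _ ≤ ∫⁻ p in U p₀, ∫⁻ q, ENNReal.ofReal (K p q) ∂μ ∂μ := by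
            refine setLIntegral_mono' hUmeas (fun p hp => ?_)
            calc ENNReal.ofReal ε * μ (U p₀)
                = ∫⁻ _ in U p₀, ENNReal.ofReal ε ∂μ := (setLIntegral_const _ _).symm
              _ ≤ ∫⁻ q in U p₀, ENNReal.ofReal (K p q) ∂μ :=
                  setLIntegral_mono' hUmeas (fun q hq =>
                    ENNReal.ofReal_le_ofReal (hεf p hp q hq))
              _ ≤ ∫⁻ q, ENNReal.ofReal (K p q) ∂μ := setLIntegral_le_lintegral _ _
        _ ≤ ∫⁻ p, ∫⁻ q, ENNReal.ofReal (K p q) ∂μ ∂μ := setLIntegral_le_lintegral _ _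
    have hgoal : ENNReal.ofReal (ε / (N : ℝ) ^ 2) * μ Set.univ ^ 2 ≤
        ∫⁻ p, ∫⁻ q, ENNReal.ofReal (K p q) ∂μ ∂μ := by
      calc ENNReal.ofReal (ε / (N : ℝ) ^ 2) * μ Set.univ ^ 2
          ≤ ENNReal.ofReal (ε / (N : ℝ) ^ 2) * ((N : ℝ≥0∞) * μ (U p₀)) ^ 2 := by
            gcongr
        _ = (ENNReal.ofReal (ε / (N : ℝ) ^ 2) * (N : ℝ≥0∞) ^ 2) *
              (μ (U p₀) * μ (U p₀)) := by ring
        _ = ENNReal.ofReal ε * μ (U p₀) * μ (U p₀) := by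
            rw [← ENNReal.ofReal_natCast N, ← ENNReal.ofReal_pow (Nat.cast_nonneg N),
              ← ENNReal.ofReal_mul (by positivity),
              div_mul_cancel₀ ε (by positivity : ((N : ℝ) ^ 2) ≠ 0), mul_assoc]
        _ ≤ ∫⁻ p, ∫⁻ q, ENNReal.ofReal (K p q) ∂μ ∂μ := hI
    have hrw : (fun p : EuclideanSpace ℝ (Fin n) × Grass n d =>
        ∫⁻ q, ENNReal.ofReal (K p q) ∂μ) =
        (fun p : EuclideanSpace ℝ (Fin n) × Grass n d =>
        ∫⁻ q, ENNReal.ofReal (h ‖p.1 - q.1‖ * kt p.2 q.2) ∂μ) := by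
      funext p
      congr 1
      funext q
      rw [hKdef]
    rw [lintegral_congr (fun p => congrFun hrw p)] at hgoal
    exact hgoal
end

section
/- Let Γ be a compact topological group with its Haar probability measure λ, acting continuously and transitively on a compact metric space (M, dist) by isometries (dist(g•u, g•v) = dist(u,v) for all g ∈ Γ and u,v ∈ M). Let k : M × M → ℝ be continuous with k ≥ 0 and k(u,u) > 0 for every u ∈ M. Then there exists a constant c > 0, depending only on Γ, M and k, such that for every finite positive Borel measure ν on M, ∬_{M×M} k(u,v) dν(u) dν(v) ≥ c · ν(M)². -/
open MeasureTheory

/-- If a compact topological group `Γ` (with its Haar probability measure) acts continuously and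
transitively by isometries on a compact metric space `M`, and `k : M × M → ℝ` is continuous,
nonnegative, with `k(u,u) > 0` for every `u`, then there is a constant `c > 0` such that every
finite positive Borel measure `ν` on `M` satisfies `∬ k(u,v) dν(u) dν(v) ≥ c · ν(M)²`. -/
theorem kernel_double_integral_ge_mass_sq
    (Γ : Type*) [Group Γ] [TopologicalSpace Γ] [IsTopologicalGroup Γ] [CompactSpace Γ]
    [MeasurableSpace Γ] [BorelSpace Γ]
    (lam : Measure Γ) [lam.IsHaarMeasure] [IsProbabilityMeasure lam]
    (M : Type*) [MetricSpace M] [CompactSpace M]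
    [MeasurableSpace M] [BorelSpace M]
    [MulAction Γ M] [ContinuousSMul Γ M]
    (htrans : ∀ u v : M, ∃ g : Γ, g • u = v)
    (hisom : ∀ (g : Γ) (u v : M), dist (g • u) (g • v) = dist u v)
    (k : M → M → ℝ) (hkcont : Continuous (Function.uncurry k))
    (hknonneg : ∀ u v : M, 0 ≤ k u v) (hkpos : ∀ u : M, 0 < k u u) :
    ∃ c : ℝ, 0 < c ∧
      ∀ ν : Measure M, IsFiniteMeasure ν →
        ENNReal.ofReal c * (ν Set.univ) ^ 2 ≤
          ∫⁻ u, ∫⁻ v, ENNReal.ofReal (k u v) ∂ν ∂ν := by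
  rcases isEmpty_or_nonempty M with hM | hM
  · refine ⟨1, one_pos, fun ν _ => ?_⟩
    simp [Set.univ_eq_empty_iff.mpr hM]
  -- minimum of k on the diagonal
  obtain ⟨x0, -, hx0⟩ := isCompact_univ.exists_isMinOn Set.univ_nonempty
    ((hkcont.comp (continuous_id.prodMk continuous_id)).continuousOn)
  set ε : ℝ := k x0 x0 / 2 with hεdef
  have hε : 0 < ε := by have := hkpos x0; positivity
  -- uniform continuity gives δ
  have huc := CompactSpace.uniformContinuous_of_continuous hkcont
  rw [Metric.uniformContinuous_iff] at huc
  obtain ⟨δ, hδpos, hδ⟩ := huc ε hε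
  have key : ∀ u v : M, dist u v < δ → ε ≤ k u v := by
    intro u v huv
    have h := hδ (a := (u, v)) (b := (v, v))
      (by simpa [Prod.dist_eq, dist_nonneg] using huv)
    simp only [Function.uncurry] at h
    rw [Real.dist_eq, abs_lt] at h
    have h2 : k x0 x0 ≤ k v v := hx0 (Set.mem_univ v)
    have : ε = k x0 x0 / 2 := hεdef
    linarith [h.1]
  -- finite cover by balls of radius δ/2
  obtain ⟨s, hs⟩ := isCompact_univ.elim_finite_subcover
    (fun x : M => Metric.ball x (δ / 2)) (fun x => Metric.isOpen_ball)
    (fun x _ => Set.mem_iUnion.mpr ⟨x, Metric.mem_ball_self (by linarith)⟩)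
  have hsne : s.Nonempty := by
    obtain ⟨i, hi, -⟩ := Set.mem_iUnion₂.mp (hs (Set.mem_univ x0))
    exact ⟨i, hi⟩
  have hNpos : (0 : ℝ) < (s.card : ℝ) := by
    exact_mod_cast Finset.card_pos.mpr hsne
  refine ⟨ε / (s.card : ℝ) ^ 2, by positivity, fun ν hν => ?_⟩
  obtain ⟨b, hb, hmax⟩ := s.exists_max_image (fun x => ν (Metric.ball x (δ / 2))) hsne
  set B := Metric.ball b (δ / 2) with hBdef
  have hcover : ν Set.univ ≤ (s.card : ENNReal) * ν B := by
    calc ν Set.univ ≤ ν (⋃ i ∈ s, Metric.ball i (δ / 2)) := measure_mono hs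
      _ ≤ ∑ i ∈ s, ν (Metric.ball i (δ / 2)) := measure_biUnion_finset_le s _
      _ ≤ s.card • ν B := Finset.sum_le_card_nsmul s _ _ hmax
      _ = (s.card : ENNReal) * ν B := by rw [nsmul_eq_mul]
  have hkB : ∀ u ∈ B, ∀ v ∈ B, ε ≤ k u v := by
    intro u hu v hv
    refine key u v ?_
    have hu' : dist u b < δ / 2 := Metric.mem_ball.mp hu
    have hv' : dist v b < δ / 2 := Metric.mem_ball.mp hv
    calc dist u v ≤ dist u b + dist b v := dist_triangle u b v
      _ < δ / 2 + δ / 2 := by rw [dist_comm b v]; linarith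
      _ = δ := by ring
  have hkm : Measurable (fun p : M × M => ENNReal.ofReal (k p.1 p.2)) :=
    ENNReal.measurable_ofReal.comp hkcont.measurable
  have hF : Measurable fun u => ∫⁻ v, ENNReal.ofReal (k u v) ∂ν :=
    Measurable.lintegral_prod_right hkm
  have step1 : ∀ u ∈ B, ENNReal.ofReal ε * ν B ≤ ∫⁻ v, ENNReal.ofReal (k u v) ∂ν := by
    intro u hu
    calc ENNReal.ofReal ε * ν B = ∫⁻ v in B, ENNReal.ofReal ε ∂ν := by
          rw [setLIntegral_const]
      _ ≤ ∫⁻ v in B, ENNReal.ofReal (k u v) ∂ν :=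
          setLIntegral_mono (hkm.comp (measurable_prodMk_left (m := inferInstance)))
            (fun v hv => ENNReal.ofReal_le_ofReal (hkB u hu v hv))
      _ ≤ ∫⁻ v, ENNReal.ofReal (k u v) ∂ν := setLIntegral_le_lintegral _ _
  have main : ENNReal.ofReal ε * ν B ^ 2 ≤ ∫⁻ u, ∫⁻ v, ENNReal.ofReal (k u v) ∂ν ∂ν := by
    calc ENNReal.ofReal ε * ν B ^ 2 = ∫⁻ _ in B, ENNReal.ofReal ε * ν B ∂ν := by
          rw [setLIntegral_const]; ring
      _ ≤ ∫⁻ u in B, ∫⁻ v, ENNReal.ofReal (k u v) ∂ν ∂ν := setLIntegral_mono hF step1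
      _ ≤ ∫⁻ u, ∫⁻ v, ENNReal.ofReal (k u v) ∂ν ∂ν := setLIntegral_le_lintegral _ _
  calc ENNReal.ofReal (ε / (s.card : ℝ) ^ 2) * ν Set.univ ^ 2
      ≤ ENNReal.ofReal (ε / (s.card : ℝ) ^ 2) * ((s.card : ENNReal) * ν B) ^ 2 := by
        gcongr
    _ = ENNReal.ofReal ε * ν B ^ 2 := by
        rw [mul_pow, ← mul_assoc]
        congr 1
        have : ((s.card : ENNReal)) ^ 2 = ENNReal.ofReal ((s.card : ℝ) ^ 2) := by
          rw [ENNReal.ofReal_pow (by positivity), ENNReal.ofReal_natCast]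
        rw [this, ← ENNReal.ofReal_mul (by positivity)]
        congr 1
        field_simp
    _ ≤ ∫⁻ u, ∫⁻ v, ENNReal.ofReal (k u v) ∂ν ∂ν := main
end

section
/- Let n ≥ 1 and 1 ≤ d ≤ n. Let A : ℝ → L(ℝⁿ, ℝⁿ) be a curve of linear maps, differentiable at t = 0 with A(0) = id, and let (e₁,…,e_d) be an orthonormal family in ℝⁿ. Define J(t) = √(det(⟨A(t)e_i, A(t)e_j⟩)_{1≤i,j≤d}), the d-dimensional Jacobian of A(t) along span(e₁,…,e_d). Then J is differentiable at t = 0 and J'(0) = Σ_{i=1}^d ⟨e_i, A'(0)e_i⟩. -/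
open scoped RealInnerProductSpace

/-- Derivative of the determinant of a matrix curve at a point where the curve equals `1`. -/
theorem hasDerivAt_det_aux {d : ℕ} (g : ℝ → Matrix (Fin d) (Fin d) ℝ)
    (g' : Matrix (Fin d) (Fin d) ℝ)
    (hg : ∀ i j, HasDerivAt (fun t => g t i j) (g' i j) 0)
    (h0 : g 0 = 1) :
    HasDerivAt (fun t => (g t).det) g'.trace 0 := by
  have key : ∀ t, (g t).det = ∑ σ : Equiv.Perm (Fin d),
      (Equiv.Perm.sign σ : ℤ) • ∏ i, g t (σ i) i := fun t => Matrix.det_apply (g t)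
  simp only [key]
  have hterm : ∀ σ : Equiv.Perm (Fin d),
      HasDerivAt (fun t => (Equiv.Perm.sign σ : ℤ) • ∏ i, g t (σ i) i)
        ((Equiv.Perm.sign σ : ℤ) •
          ∑ i, (∏ j ∈ Finset.univ.erase i, g 0 (σ j) j) • g' (σ i) i) 0 := by
    intro σ
    exact (HasDerivAt.fun_finsetProd (fun i _ => hg (σ i) i)).const_smul (Equiv.Perm.sign σ : ℤ)
  have := HasDerivAt.fun_sum (u := Finset.univ) (fun σ _ => hterm σ)
  refine this.congr_deriv (Eq.symm ?_)
  rw [Finset.sum_eq_single (1 : Equiv.Perm (Fin d))]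
  · simp only [Equiv.Perm.sign_one, Units.val_one, one_smul, Equiv.Perm.one_apply]
    rw [Matrix.trace]
    congr 1
    ext i
    rw [Finset.prod_congr rfl (fun j hj => by rw [h0, Matrix.one_apply_eq]),
      Finset.prod_const_one, one_smul]
    rfl
  · intro σ _ hσ
    have hprod : ∀ i : Fin d, (∏ j ∈ Finset.univ.erase i, g 0 (σ j) j) = 0 := by
      intro i
      obtain ⟨a, ha⟩ : ∃ a, σ a ≠ a := by
        by_contra h
        push_neg at h
        exact hσ (Equiv.ext h)
      have hσa : σ (σ a) ≠ σ a := fun h => ha (σ.injective h)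
      rcases ne_or_eq a i with h | h
      · exact Finset.prod_eq_zero (Finset.mem_erase.2 ⟨h, Finset.mem_univ _⟩)
          (by rw [h0, Matrix.one_apply_ne ha])
      · subst h
        exact Finset.prod_eq_zero (i := σ a)
          (Finset.mem_erase.2 ⟨ha, Finset.mem_univ _⟩)
          (by rw [h0, Matrix.one_apply_ne hσa])
    simp [hprod]
  · intro h
    exact absurd (Finset.mem_univ _) h

/-- Derivative of the `d`-dimensional Jacobian: if `A(t)` is a curve of linear maps of `ℝⁿ`
differentiable at `0` with `A(0) = id`, and `(e₁,…,e_d)` is an orthonormal family, then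
`J(t) = √(det(⟨A(t)e_i, A(t)e_j⟩)_{i,j})` is differentiable at `0` with
`J'(0) = Σ_i ⟨e_i, A'(0)e_i⟩`. -/
theorem hasDerivAt_jacobian
    (n d : ℕ) (hn : 1 ≤ n) (hd1 : 1 ≤ d) (hdn : d ≤ n)
    (A : ℝ → (EuclideanSpace ℝ (Fin n) →L[ℝ] EuclideanSpace ℝ (Fin n)))
    (A' : EuclideanSpace ℝ (Fin n) →L[ℝ] EuclideanSpace ℝ (Fin n))
    (hA : HasDerivAt A A' 0)
    (hA0 : A 0 = ContinuousLinearMap.id ℝ (EuclideanSpace ℝ (Fin n)))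
    (e : Fin d → EuclideanSpace ℝ (Fin n)) (he : Orthonormal ℝ e) :
    HasDerivAt
      (fun t : ℝ =>
        Real.sqrt (Matrix.det (Matrix.of fun i j : Fin d => ⟪A t (e i), A t (e j)⟫)))
      (∑ i : Fin d, ⟪e i, A' (e i)⟫) 0 := by
  set G : ℝ → Matrix (Fin d) (Fin d) ℝ :=
    fun t => Matrix.of fun i j : Fin d => ⟪A t (e i), A t (e j)⟫ with hG
  set G' : Matrix (Fin d) (Fin d) ℝ :=
    Matrix.of fun i j : Fin d => ⟪A' (e i), e j⟫ + ⟪e i, A' (e j)⟫ with hG'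
  have hApt : ∀ v : EuclideanSpace ℝ (Fin n), HasDerivAt (fun t => A t v) (A' v) 0 := by
    intro v
    simpa using hA.clm_apply (hasDerivAt_const 0 v)
  have hGder : ∀ i j, HasDerivAt (fun t => G t i j) (G' i j) 0 := by
    intro i j
    have := (hApt (e i)).inner ℝ (hApt (e j))
    simpa [hG, hG', hA0, add_comm] using this
  have hG0 : G 0 = 1 := by
    ext i j
    simp only [hG, Matrix.of_apply, hA0, ContinuousLinearMap.id_apply]
    rw [orthonormal_iff_ite.1 he, Matrix.one_apply]
  have hdet : HasDerivAt (fun t => (G t).det) G'.trace 0 :=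
    hasDerivAt_det_aux G G' hGder hG0
  have hdet0 : (G 0).det = 1 := by rw [hG0, Matrix.det_one]
  have hsqrt := hdet.sqrt (by rw [hdet0]; norm_num)
  have htr : G'.trace = 2 * ∑ i : Fin d, ⟪e i, A' (e i)⟫ := by
    rw [Matrix.trace, Finset.mul_sum]
    refine Finset.sum_congr rfl fun i _ => ?_
    simp only [Matrix.diag_apply, hG', Matrix.of_apply, real_inner_comm (A' (e i)) (e i)]
    ring
  convert hsqrt using 1
  rw [hdet0, htr]
  norm_num
end

section
/- Let Γ be a compact topological group with Haar probability measure λ, acting continuously on a compact metric space (M, dist) by isometries. Let u₀ ∈ M, δ > 0, and let φ : M → ℝ be a continuous nonnegative function whose support is contained in the open ball of radius δ about u₀ and which satisfies ∫_Γ φ(g•u)² dλ(g) ≤ 1 for all u ∈ M. Define ψ : M × M → ℝ by ψ(u,v) = ∫_Γ φ(g•u)·φ(g•v) dλ(g). Then ψ is continuous and nonnegative, ψ(u,v) ≤ 1 for all u, v ∈ M, and ψ(u,v) = 0 whenever dist(u,v) ≥ 2δ. -/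
open MeasureTheory

/-- Properties of the regularizing function `ψ(u,v) = ∫_Γ φ(g•u)·φ(g•v) dλ(g)`: if `Γ` is a
compact group with Haar probability measure `λ` acting continuously by isometries on a compact
metric space `M`, and `φ ≥ 0` is continuous, supported in the ball of radius `δ` about `u₀`,
with `∫_Γ φ(g•u)² dλ(g) ≤ 1` for all `u`, then `ψ` is continuous, nonnegative, bounded by `1`,
and vanishes whenever `dist(u,v) ≥ 2δ`. -/
theorem regularizing_function_properties
    (Γ : Type*) [Group Γ] [TopologicalSpace Γ] [IsTopologicalGroup Γ] [CompactSpace Γ]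
    [MeasurableSpace Γ] [BorelSpace Γ]
    (lam : Measure Γ) [lam.IsHaarMeasure] [IsProbabilityMeasure lam]
    (M : Type*) [MetricSpace M] [CompactSpace M]
    [MulAction Γ M] [ContinuousSMul Γ M]
    (hisom : ∀ (g : Γ) (u v : M), dist (g • u) (g • v) = dist u v)
    (u₀ : M) (δ : ℝ) (hδ : 0 < δ)
    (φ : M → ℝ) (hφcont : Continuous φ) (hφnonneg : ∀ u, 0 ≤ φ u)
    (hφsupp : Function.support φ ⊆ Metric.ball u₀ δ)
    (hφL2 : ∀ u : M, ∫ g, (φ (g • u)) ^ 2 ∂lam ≤ 1) :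
    Continuous (fun p : M × M => ∫ g, φ (g • p.1) * φ (g • p.2) ∂lam) ∧
    (∀ u v : M, 0 ≤ ∫ g, φ (g • u) * φ (g • v) ∂lam) ∧
    (∀ u v : M, (∫ g, φ (g • u) * φ (g • v) ∂lam) ≤ 1) ∧
    (∀ u v : M, 2 * δ ≤ dist u v → (∫ g, φ (g • u) * φ (g • v) ∂lam) = 0) := by

  -- boundedness of φ
  haveI : Nonempty M := ⟨u₀⟩
  obtain ⟨C, hC⟩ : ∃ C : ℝ, ∀ u : M, |φ u| ≤ C := by
    obtain ⟨u, -, hu⟩ := isCompact_univ.exists_isMaxOn ⟨u₀, Set.mem_univ u₀⟩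
      (hφcont.abs.continuousOn)
    exact ⟨|φ u|, fun v => hu (Set.mem_univ v)⟩
  have hint : ∀ u v : M, Integrable (fun g : Γ => φ (g • u) * φ (g • v)) lam := by
    intro u v
    exact ((hφcont.comp (continuous_id.smul continuous_const)).mul
      (hφcont.comp (continuous_id.smul continuous_const))).integrable_of_hasCompactSupport
      (HasCompactSupport.of_compactSpace _)
  have hintsq : ∀ u : M, Integrable (fun g : Γ => (φ (g • u)) ^ 2) lam := by
    intro u
    have := hint u u
    simpa [sq] using this
  refine ⟨?_, ?_, ?_, ?_⟩
  · -- continuity via dominated convergence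
    refine continuous_of_dominated (F := fun p : M × M => fun g : Γ =>
      φ (g • p.1) * φ (g • p.2)) (bound := fun _ => C * C) ?_ ?_ ?_ ?_
    · intro p; exact (hint p.1 p.2).aestronglyMeasurable
    · intro p
      filter_upwards with g
      have h1 := hC (g • p.1); have h2 := hC (g • p.2)
      have h1' : (0:ℝ) ≤ C := le_trans (abs_nonneg _) h1
      calc ‖φ (g • p.1) * φ (g • p.2)‖ = |φ (g • p.1)| * |φ (g • p.2)| := by
            simp [abs_mul]
        _ ≤ C * C := mul_le_mul h1 h2 (abs_nonneg _) h1'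
    · exact integrable_const _
    · filter_upwards with g
      exact ((hφcont.comp (continuous_const.smul continuous_fst)).mul
        (hφcont.comp (continuous_const.smul continuous_snd)))
  · intro u v
    exact integral_nonneg fun g => mul_nonneg (hφnonneg _) (hφnonneg _)
  · intro u v
    have hmono : (∫ g, φ (g • u) * φ (g • v) ∂lam) ≤
        ∫ g, ((φ (g • u)) ^ 2 + (φ (g • v)) ^ 2) / 2 ∂lam := by
      refine integral_mono (hint u v) (((hintsq u).add (hintsq v)).div_const 2) ?_
      intro g
      nlinarith [sq_nonneg (φ (g • u) - φ (g • v))]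
    have heq : (∫ g, ((φ (g • u)) ^ 2 + (φ (g • v)) ^ 2) / 2 ∂lam)
        = ((∫ g, (φ (g • u)) ^ 2 ∂lam) + ∫ g, (φ (g • v)) ^ 2 ∂lam) / 2 := by
      rw [integral_div, integral_add (hintsq u) (hintsq v)]
    have := hφL2 u
    have := hφL2 v
    rw [heq] at hmono
    linarith
  · intro u v huv
    have : (fun g : Γ => φ (g • u) * φ (g • v)) = fun _ => 0 := by
      funext g
      by_contra h
      have h1 : φ (g • u) ≠ 0 := fun h0 => h (by simp [h0])
      have h2 : φ (g • v) ≠ 0 := fun h0 => h (by simp [h0])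
      have hb1 := hφsupp h1
      have hb2 := hφsupp h2
      rw [Metric.mem_ball] at hb1 hb2
      have : dist (g • u) (g • v) < 2 * δ := by
        have := dist_triangle (g • u) u₀ (g • v)
        rw [dist_comm u₀ (g • v)] at this
        linarith
      rw [hisom] at this
      linarith
    rw [this, integral_zero]
end
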